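/- Let 0 < θ < 1/3 be real and let T be a 2-primitive set of integers greater than 1 such that P(t) < t^θ for every t ∈ T, where P(t) denotes the largest prime factor of t. For real z ≥ 2, let N(z) be the number of elements of T in [2, z]. Then N(z) < z^{(1+θ)/2} − Σ_q ⌊z^{(1+θ)/2}/q⌋, where q runs over the primes in the interval [z^{(1+θ)/4}, z^{(1+θ)/2}). -/

import Mathlib

open scoped BigOperators ENNReal

/-- `primesOf A` is the set `𝒫(A)` of primes dividing some member of `A`. -/
def primesOf (A : Set ℕ) : Set ℕ := {p : ℕ | p.Prime ∧ ∃ n ∈ A, p ∣ n}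

/-- A set of integers greater than 1 is *primitive* if no element divides another. -/
def Primitive (A : Set ℕ) : Prop :=
  (∀ n ∈ A, 1 < n) ∧ ∀ a ∈ A, ∀ b ∈ A, a ≠ b → ¬a ∣ b

/-- A set `A` of integers greater than 1 with `|A| ≥ k + 1` is *k-primitive* if no element
divides the product of `k` distinct other elements of `A`. -/
def KPrimitive (k : ℕ) (A : Set ℕ) : Prop :=
  (∀ n ∈ A, 1 < n) ∧ (k : ℕ∞) + 1 ≤ A.encard ∧
    ∀ a ∈ A, ∀ B : Finset ℕ, ↑B ⊆ A \ {a} → B.card = k → ¬a ∣ ∏ b ∈ B, b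

/-- `maxPrimeFac t` is the largest prime factor `P(t)` of `t`. -/
def maxPrimeFac (t : ℕ) : ℕ := t.primeFactors.sup id

/-- Abstract assignment lemma: elements of `W` can be injectively assigned divisors in `S`. -/
lemma card_le_of_assignment (T : Set ℕ) (W S : Finset ℕ) (D : ℕ → ℕ)
    (hWT : ∀ t ∈ W, t ∈ T)
    (hprim : ∀ a ∈ T, ∀ b ∈ T, a ≠ b → ¬ a ∣ b)
    (hkey2 : ∀ a ∈ T, ∀ b ∈ T, ∀ c ∈ T, a ≠ b → a ≠ c → b ≠ c → ¬ a ∣ b * c)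
    (hD : ∀ t ∈ W, D t ∣ t) (hDS : ∀ t ∈ W, D t ∈ S)
    (hsm : ∀ t ∈ W, t ∈ S → D t = t)
    (hbig : ∀ t ∈ W, t ∉ S → t / D t ∈ S) :
    W.card ≤ S.card := by
  classical
  set fib : ℕ → Finset ℕ := fun v => W.filter fun s => D s = v with hfib_def
  set lead : ℕ → ℕ := fun v =>
    if v * v ∈ fib v then v * v
    else if h : (fib v).Nonempty then (fib v).min' h else 0 with hlead_def
  have hfib : ∀ t ∈ W, t ∈ fib (D t) := by
    intro t ht; simp [hfib_def, ht]
  have hmemfib : ∀ v t, t ∈ fib v → t ∈ W ∧ D t = v := by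
    intro v t ht; simpa [hfib_def] using ht
  have hlead_mem : ∀ v, (fib v).Nonempty → lead v ∈ fib v := by
    intro v hv
    by_cases hsq : v * v ∈ fib v
    · simp only [hlead_def, if_pos hsq]; exact hsq
    · simp only [hlead_def, if_neg hsq, dif_pos hv]; exact Finset.min'_mem _ _
  have hlead_sq : ∀ v, v * v ∈ fib v → lead v = v * v := by
    intro v hsq; simp only [hlead_def, if_pos hsq]
  have hfact : ∀ u ∈ W, D u * (u / D u) = u := fun u hu => Nat.mul_div_cancel' (hD u hu)
  have hfoll : ∀ t ∈ W, t ≠ lead (D t) → t ∉ S := by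
    intro t ht hne hts
    have hDt : D t = t := hsm t ht hts
    have hsingle : fib (D t) = {t} := by
      apply Finset.eq_singleton_iff_unique_mem.mpr
      refine ⟨hfib t ht, ?_⟩
      intro s hs
      obtain ⟨hsW, hsD⟩ := hmemfib _ _ hs
      by_contra hst
      have hts' : t ∣ s := by rw [← hDt, ← hsD]; exact hD s hsW
      exact hprim t (hWT t ht) s (hWT s hsW) (Ne.symm hst) hts'
    have := hlead_mem (D t) ⟨t, hfib t ht⟩
    rw [hsingle, Finset.mem_singleton] at this
    exact hne this.symm
  set f : ℕ → ℕ := fun t => if t = lead (D t) then D t else t / D t with hf_def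
  have hmaps : ∀ t ∈ W, f t ∈ S := by
    intro t ht
    by_cases h : t = lead (D t)
    · simp only [hf_def, if_pos h]; exact hDS t ht
    · simp only [hf_def, if_neg h]; exact hbig t ht (hfoll t ht h)
  have hmixed : ∀ a ∈ W, ∀ b ∈ W, a = lead (D a) → b ≠ lead (D b) →
      D a = b / D b → a ≠ b → False := by
    intro a haW b hbW hal hbf hab hne
    have hfactb : D b * (b / D b) = b := hfact b hbW
    have hbfib : b ∈ fib (D b) := hfib b hbW
    have hsmem := hlead_mem (D b) ⟨b, hbfib⟩
    obtain ⟨hsW, hsD⟩ := hmemfib _ _ hsmem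
    have hsb : lead (D b) ≠ b := fun h => hbf h.symm
    by_cases hv : D a = D b
    · have hq : b / D b = D b := by rw [← hab, hv]
      rw [hq] at hfactb
      have hlb : lead (D b) = D b * D b := hlead_sq (D b) (by rw [hfactb]; exact hbfib)
      exact hsb (by rw [hlb, hfactb])
    · have hsa : lead (D b) ≠ a := fun h => hv (h ▸ hsD)
      refine hkey2 b (hWT b hbW) (lead (D b)) (hWT _ hsW) a (hWT a haW)
        (Ne.symm hsb) (Ne.symm hne) hsa ?_
      have h5 : D b ∣ lead (D b) := by have h6 := hD _ hsW; rwa [hsD] at h6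
      have h7 : D b * (b / D b) ∣ lead (D b) * a :=
        mul_dvd_mul h5 (by rw [← hab]; exact hD a haW)
      rwa [hfactb] at h7
  apply Finset.card_le_card_of_injOn f hmaps
  intro t ht' t' ht'' heq
  have ht : t ∈ W := ht'
  have ht2 : t' ∈ W := ht''
  by_contra hne
  by_cases h1 : t = lead (D t) <;> by_cases h2 : t' = lead (D t')
  · simp only [hf_def, if_pos h1, if_pos h2] at heq
    exact hne (by rw [h1, heq, ← h2])
  · simp only [hf_def, if_pos h1, if_neg h2] at heq
    exact hmixed t ht t' ht2 h1 h2 heq hne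
  · simp only [hf_def, if_neg h1, if_pos h2] at heq
    exact hmixed t' ht2 t ht h2 h1 heq.symm (Ne.symm hne)
  · simp only [hf_def, if_neg h1, if_neg h2] at heq
    have hvv : D t ≠ D t' := by
      intro h
      exact hne (by rw [← hfact t ht, ← hfact t' ht2, heq, h])
    have hsmem := hlead_mem (D t) ⟨t, hfib t ht⟩
    obtain ⟨hsW, hsD⟩ := hmemfib _ _ hsmem
    have hst : lead (D t) ≠ t := fun h => h1 h.symm
    have hst' : lead (D t) ≠ t' := fun h => hvv ((h ▸ hsD).symm ▸ rfl)
    refine hkey2 t (hWT t ht) (lead (D t)) (hWT _ hsW) t' (hWT t' ht2)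
      (Ne.symm hst) hne hst' ?_
    have h5 : D t ∣ lead (D t) := by have h6 := hD _ hsW; rwa [hsD] at h6
    have h7 : D t * (t / D t) ∣ lead (D t) * t' :=
      mul_dvd_mul h5 (by rw [heq]; exact Nat.div_dvd_of_dvd (hD t' ht2))
    rwa [hfact t ht] at h7

theorem count_lt_of_smooth (θ : ℝ) (hθ0 : 0 < θ) (hθ1 : θ < 1 / 3) (T : Set ℕ)
    (hT : KPrimitive 2 T)
    (hP : ∀ t ∈ T, ((maxPrimeFac t : ℕ) : ℝ) < ((t : ℕ) : ℝ) ^ θ)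
    (z : ℝ) (hz : 2 ≤ z) :
    (({t : ℕ | t ∈ T ∧ 2 ≤ t ∧ (t : ℝ) ≤ z}.ncard : ℕ) : ℝ) <
      z ^ ((1 + θ) / 2) -
        ∑' q : {q : ℕ | q.Prime ∧ z ^ ((1 + θ) / 4) ≤ (q : ℝ) ∧ (q : ℝ) < z ^ ((1 + θ) / 2)},
          (⌊z ^ ((1 + θ) / 2) / ((q : ℕ) : ℝ)⌋ : ℝ) := by
  classical
  obtain ⟨hT1, hTcard, hT3⟩ := hT
  have hz0 : (0:ℝ) < z := by linarith
  have hz1 : (1:ℝ) < z := by linarith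
  -- derived divisibility facts
  have hkey2 : ∀ a ∈ T, ∀ b ∈ T, ∀ c ∈ T, a ≠ b → a ≠ c → b ≠ c → ¬ a ∣ b * c := by
    intro a ha b hb c hc hab hac hbc hdvd
    refine hT3 a ha {b, c} ?_ ?_ ?_
    · intro x hx
      simp only [Finset.coe_insert, Finset.coe_singleton, Set.mem_insert_iff,
        Set.mem_singleton_iff] at hx
      rcases hx with rfl | rfl
      · exact ⟨hb, by simpa using hab.symm⟩
      · exact ⟨hc, by simpa using hac.symm⟩
    · rw [Finset.card_insert_of_notMem (by simpa using hbc), Finset.card_singleton]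
    · rwa [Finset.prod_pair hbc]
  have hprim : ∀ a ∈ T, ∀ b ∈ T, a ≠ b → ¬ a ∣ b := by
    intro a ha b hb hab hdvd
    have hex : ∃ c ∈ T, c ≠ a ∧ c ≠ b := by
      by_contra hcon
      push_neg at hcon
      have hsub : T ⊆ {a, b} := by
        intro x hx
        by_cases hxa : x = a
        · exact Or.inl hxa
        · exact Or.inr (hcon x hx hxa)
      have h2 : T.encard ≤ 2 := by
        refine le_trans (Set.encard_mono hsub) ?_
        calc ({a, b} : Set ℕ).encard ≤ ({b} : Set ℕ).encard + 1 := Set.encard_insert_le _ _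
        _ = 2 := by rw [Set.encard_singleton]; rfl
      have h3 := le_trans hTcard h2
      norm_num at h3
    obtain ⟨c, hc, hca, hcb⟩ := hex
    exact hkey2 a ha b hb c hc hab (Ne.symm hca) (Ne.symm hcb) (dvd_mul_of_dvd_left hdvd c)
  -- analytic setup
  set X : ℝ := z ^ ((1 + θ) / 2) with hX_def
  set Q : ℝ := z ^ ((1 + θ) / 4) with hQ_def
  have hX1 : 1 < X := (Real.one_lt_rpow_iff_of_pos hz0).mpr (Or.inl ⟨hz1, by linarith⟩)
  have hQ1 : 1 < Q := (Real.one_lt_rpow_iff_of_pos hz0).mpr (Or.inl ⟨hz1, by linarith⟩)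
  have hQX : Q ≤ X := Real.rpow_le_rpow_of_exponent_le hz1.le (by linarith)
  have hQQX : Q * Q = X := by
    rw [hQ_def, hX_def, ← Real.rpow_add hz0]; congr 1; ring
  have hXz : X ≤ z := by
    rw [hX_def]
    calc z ^ ((1 + θ) / 2) ≤ z ^ (1:ℝ) :=
      Real.rpow_le_rpow_of_exponent_le hz1.le (by linarith)
    _ = z := Real.rpow_one z
  have hθQ : z ^ θ < Q := by
    rw [hQ_def]; exact Real.rpow_lt_rpow_of_exponent_lt hz1 (by linarith)
  have hXX : z * z ^ θ = X * X := by
    rw [hX_def, ← Real.rpow_add hz0]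
    nth_rewrite 1 [← Real.rpow_one z]
    rw [← Real.rpow_add hz0]; congr 1; ring
  have hX0 : (0:ℝ) < X := lt_trans one_pos hX1
  set M : ℕ := ⌊X⌋₊ with hM_def
  have hM1 : 1 ≤ M := Nat.le_floor (by exact_mod_cast hX1.le)
  have hMX : (M:ℝ) ≤ X := Nat.floor_le hX0.le
  have hXM : X < M + 1 := Nat.lt_floor_add_one X
  -- the window of T
  set W : Finset ℕ := (Finset.Icc 2 ⌊z⌋₊).filter (· ∈ T) with hW_def
  have hset_eq : {t : ℕ | t ∈ T ∧ 2 ≤ t ∧ (t : ℝ) ≤ z} = ↑W := by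
    ext t
    simp only [Set.mem_setOf_eq, hW_def, Finset.coe_filter, Finset.mem_Icc]
    constructor
    · rintro ⟨h1, h2, h3⟩; exact ⟨⟨h2, Nat.le_floor h3⟩, h1⟩
    · rintro ⟨⟨h2, h3⟩, h1⟩; exact ⟨h1, h2, (Nat.le_floor_iff hz0.le).mp h3⟩
  have hWmem : ∀ t ∈ W, t ∈ T ∧ 2 ≤ t ∧ (t:ℝ) ≤ z := by
    intro t ht
    rw [hW_def, Finset.mem_filter, Finset.mem_Icc] at ht
    exact ⟨ht.2, ht.1.1, (Nat.le_floor_iff hz0.le).mp ht.1.2⟩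
  have hWprimes : ∀ t ∈ W, ∀ p ∈ t.primeFactors, (p:ℝ) < Q := by
    intro t ht p hp
    obtain ⟨htT, ht2, htz⟩ := hWmem t ht
    have hple : p ≤ maxPrimeFac t := Finset.le_sup (f := id) hp
    have h1 : ((maxPrimeFac t : ℕ):ℝ) < (t:ℝ) ^ θ := hP t htT
    have h2 : (t:ℝ) ^ θ ≤ z ^ θ := Real.rpow_le_rpow (Nat.cast_nonneg t) htz hθ0.le
    have h3 : (p:ℝ) ≤ (maxPrimeFac t : ℝ) := by exact_mod_cast hple
    linarith
  -- the codomain of the injection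
  set S : Finset ℕ := (Finset.Icc 2 M).filter (fun n => ∀ p ∈ n.primeFactors, (p:ℝ) < Q)
    with hS_def
  -- choice of divisor
  have hDex : ∀ t : ℕ, ∃ d : ℕ,
      t ∈ W → (d ∣ t ∧ d ∈ S ∧ (t ∈ S → d = t) ∧ (t ∉ S → t / d ∈ S)) := by
    intro t
    by_cases ht : t ∈ W
    swap
    · exact ⟨1, fun h => absurd h ht⟩
    obtain ⟨hTt, ht2, htz⟩ := hWmem t ht
    have ht0 : t ≠ 0 := by omega
    by_cases htS : t ∈ S
    · exact ⟨t, fun _ => ⟨dvd_rfl, htS, fun _ => rfl, fun h => absurd htS h⟩⟩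
    have hMt : M < t := by
      by_contra hle
      push_neg at hle
      exact htS (Finset.mem_filter.mpr ⟨Finset.mem_Icc.mpr ⟨ht2, hle⟩, hWprimes t ht⟩)
    have hne : ((t.divisors.filter (· ≤ M)).Nonempty) :=
      ⟨1, by simp [Nat.mem_divisors, ht0, hM1]⟩
    obtain ⟨d, hdmem, hdmax0⟩ : ∃ d, d ∈ t.divisors.filter (· ≤ M) ∧
        ∀ e ∈ t.divisors.filter (· ≤ M), e ≤ d :=
      ⟨_, Finset.max'_mem _ hne, fun e he => Finset.le_max' _ e he⟩
    rw [Finset.mem_filter, Nat.mem_divisors] at hdmem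
    obtain ⟨⟨hddvd, -⟩, hdM⟩ := hdmem
    have hdmax : ∀ e, e ∣ t → e ≤ M → e ≤ d := by
      intro e he heM
      exact hdmax0 e (by rw [Finset.mem_filter, Nat.mem_divisors]; exact ⟨⟨he, ht0⟩, heM⟩)
    have hd0 : d ≠ 0 := by
      intro h; rw [h] at hddvd; exact ht0 (Nat.eq_zero_of_zero_dvd hddvd)
    have hd2 : 2 ≤ d := by
      obtain ⟨p, hp, hpt⟩ := Nat.exists_prime_and_dvd (by omega : t ≠ 1)
      have hpQ : (p:ℝ) < Q := hWprimes t ht p (Nat.mem_primeFactors.mpr ⟨hp, hpt, ht0⟩)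
      have hpM : p ≤ M := Nat.le_floor (le_of_lt (lt_of_lt_of_le hpQ hQX))
      exact le_trans hp.two_le (hdmax p hpt hpM)
    have hdS : d ∈ S := by
      refine Finset.mem_filter.mpr ⟨Finset.mem_Icc.mpr ⟨hd2, hdM⟩, ?_⟩
      intro p hp
      exact hWprimes t ht p (Nat.primeFactors_mono hddvd ht0 hp)
    obtain ⟨m, hm_def⟩ : ∃ m, m = t / d := ⟨_, rfl⟩
    have hdm : d * m = t := by rw [hm_def]; exact Nat.mul_div_cancel' hddvd
    have hm0 : m ≠ 0 := by intro h; rw [h, mul_zero] at hdm; exact ht0 hdm.symm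
    have hm1 : m ≠ 1 := by intro h; rw [h, mul_one] at hdm; omega
    have hm2 : 2 ≤ m := by omega
    have hmdvd : m ∣ t := ⟨d, by rw [← hdm, mul_comm]⟩
    obtain ⟨p', hp', hp'm⟩ := Nat.exists_prime_and_dvd hm1
    have hdp' : d * p' ∣ t := by
      rw [← hdm]; exact mul_dvd_mul_left d hp'm
    have hnotle : ¬ d * p' ≤ M := by
      intro hle
      have h4 := hdmax (d * p') hdp' hle
      have h5 := hp'.two_le
      nlinarith
    have hMdp' : (M:ℝ) + 1 ≤ (d:ℝ) * (p':ℝ) := by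
      have h6 : M + 1 ≤ d * p' := by omega
      exact_mod_cast h6
    have hXdp' : X < (d:ℝ) * p' := lt_of_lt_of_le hXM hMdp'
    have hp'pf : p' ∈ t.primeFactors :=
      Nat.mem_primeFactors.mpr ⟨hp', dvd_trans hp'm hmdvd, ht0⟩
    have hp'z : (p':ℝ) < z ^ θ := by
      have h1 := hP t hTt
      have h2 : (p':ℝ) ≤ (maxPrimeFac t : ℝ) := by
        exact_mod_cast Finset.le_sup (f := id) hp'pf
      have h3 : (t:ℝ)^θ ≤ z^θ := Real.rpow_le_rpow (Nat.cast_nonneg t) htz hθ0.le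
      linarith
    have hcast : (d:ℝ) * (m:ℝ) = (t:ℝ) := by exact_mod_cast hdm
    have hmX : (m:ℝ) < X := by
      have hm0' : (0:ℝ) < m := by exact_mod_cast Nat.pos_of_ne_zero hm0
      have h1 : (m:ℝ) * X < (m:ℝ) * ((d:ℝ) * p') := by
        exact mul_lt_mul_of_pos_left hXdp' hm0'
      have h2 : (m:ℝ) * ((d:ℝ)*(p':ℝ)) = (t:ℝ) * (p':ℝ) := by rw [← hcast]; ring
      have h3 : (t:ℝ) * (p':ℝ) < z * z ^ θ := by
        have ht0' : (0:ℝ) ≤ (t:ℝ) := Nat.cast_nonneg t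
        have hp0' : (0:ℝ) ≤ (p':ℝ) := Nat.cast_nonneg p'
        apply mul_lt_mul' htz hp'z hp0' hz0
      rw [h2] at h1
      nlinarith [hXX]
    have hmM : m ≤ M := Nat.le_floor hmX.le
    have hmS : m ∈ S := Finset.mem_filter.mpr ⟨Finset.mem_Icc.mpr ⟨hm2, hmM⟩,
      fun p hp => hWprimes t ht p (Nat.primeFactors_mono hmdvd ht0 hp)⟩
    exact ⟨d, fun _ => ⟨hddvd, hdS, fun h => absurd h htS, fun _ => hm_def ▸ hmS⟩⟩
  choose D hDspec using hDex
  have hcard1 : W.card ≤ S.card :=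
    card_le_of_assignment T W S D (fun t ht => (hWmem t ht).1) hprim hkey2
      (fun t ht => (hDspec t ht).1) (fun t ht => (hDspec t ht).2.1)
      (fun t ht => (hDspec t ht).2.2.1) (fun t ht => (hDspec t ht).2.2.2)
  -- the primes in the window
  set Qf : Finset ℕ := (Finset.Icc 2 M).filter
    (fun q => q.Prime ∧ Q ≤ (q:ℝ) ∧ (q:ℝ) < X) with hQf_def
  have hQset : {q : ℕ | q.Prime ∧ Q ≤ (q:ℝ) ∧ (q:ℝ) < X} = ↑Qf := by
    ext q
    simp only [Set.mem_setOf_eq, hQf_def, Finset.coe_filter, Finset.mem_Icc]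
    constructor
    · rintro ⟨h1, h2, h3⟩
      exact ⟨⟨h1.two_le, Nat.le_floor h3.le⟩, h1, h2, h3⟩
    · rintro ⟨-, h1, h2, h3⟩; exact ⟨h1, h2, h3⟩
  set Mul : ℕ → Finset ℕ := fun q => (Finset.Ioc 0 M).filter (fun n => q ∣ n) with hMul_def
  have hMulcard : ∀ q, (Mul q).card = M / q := fun q => Nat.Ioc_filter_dvd_card_eq_div M q
  have hMulsub : ∀ q ∈ Qf, Mul q ⊆ Finset.Icc 2 M := by
    intro q hq n hn
    rw [hMul_def, Finset.mem_filter, Finset.mem_Ioc] at hn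
    obtain ⟨⟨hn0, hnM⟩, hqn⟩ := hn
    have hq2 : 2 ≤ q := (Finset.mem_filter.mp hq).2.1.two_le
    have hle : q ≤ n := Nat.le_of_dvd hn0 hqn
    rw [Finset.mem_Icc]; omega
  have hdisjMul : ∀ q ∈ Qf, ∀ q' ∈ Qf, q ≠ q' → Disjoint (Mul q) (Mul q') := by
    intro q hq q' hq' hne
    rw [Finset.disjoint_left]
    intro n hn hn'
    rw [hMul_def, Finset.mem_filter, Finset.mem_Ioc] at hn hn'
    obtain ⟨⟨hn0, hnM⟩, hqn⟩ := hn
    obtain ⟨-, hq'n⟩ := hn'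
    obtain ⟨-, hqP, hqQ, -⟩ := Finset.mem_filter.mp hq
    obtain ⟨-, hq'P, hq'Q, -⟩ := Finset.mem_filter.mp hq'
    have hqq' : q * q' ∣ n :=
      Nat.Coprime.mul_dvd_of_dvd_of_dvd ((Nat.coprime_primes hqP hq'P).mpr hne) hqn hq'n
    have hlen : q * q' ≤ n := Nat.le_of_dvd hn0 hqq'
    have hQ0 : (0:ℝ) ≤ Q := le_of_lt (lt_trans one_pos hQ1)
    have hnX : ((q:ℝ) * (q':ℝ)) ≤ X := by
      have : ((q * q' : ℕ):ℝ) ≤ (M:ℝ) := by exact_mod_cast le_trans hlen hnM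
      push_cast at this
      linarith
    have hq'q : q' ≤ q := by
      have hB : X ≤ (q:ℝ)*(q:ℝ) := by
        rw [← hQQX]; exact mul_le_mul hqQ hqQ hQ0 (le_trans hQ0 hqQ)
      have : (q:ℝ) * (q':ℝ) ≤ (q:ℝ) * (q:ℝ) := le_trans hnX hB
      have hq0 : (0:ℝ) < (q:ℝ) := by exact_mod_cast hqP.pos
      exact_mod_cast le_of_mul_le_mul_left this hq0
    have hqq : q ≤ q' := by
      have hB : X ≤ (q':ℝ)*(q':ℝ) := by
        rw [← hQQX]; exact mul_le_mul hq'Q hq'Q hQ0 (le_trans hQ0 hq'Q)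
      have h7 : (q':ℝ) * (q:ℝ) ≤ (q':ℝ) * (q':ℝ) := by
        rw [mul_comm (q':ℝ) (q:ℝ)]; exact le_trans hnX hB
      have hq0 : (0:ℝ) < (q':ℝ) := by exact_mod_cast hq'P.pos
      exact_mod_cast le_of_mul_le_mul_left h7 hq0
    exact hne (le_antisymm hqq hq'q)
  have hdisjS : ∀ q ∈ Qf, Disjoint S (Mul q) := by
    intro q hq
    rw [Finset.disjoint_left]
    intro n hnS hnM
    obtain ⟨hIcc, hsmooth⟩ := Finset.mem_filter.mp hnS
    rw [hMul_def, Finset.mem_filter, Finset.mem_Ioc] at hnM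
    obtain ⟨⟨hn0, -⟩, hqn⟩ := hnM
    obtain ⟨-, hqP, hqQ, -⟩ := Finset.mem_filter.mp hq
    have h8 : (q:ℝ) < Q := hsmooth q (Nat.mem_primeFactors.mpr ⟨hqP, hqn, by omega⟩)
    linarith
  have hunion : S.card + ∑ q ∈ Qf, (Mul q).card ≤ M - 1 := by
    have hdU : (Qf.biUnion Mul).card = ∑ q ∈ Qf, (Mul q).card :=
      Finset.card_biUnion hdisjMul
    have hdisjSU : Disjoint S (Qf.biUnion Mul) :=
      (Finset.disjoint_biUnion_right _ _ _).mpr hdisjS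
    have hsub : S ∪ Qf.biUnion Mul ⊆ Finset.Icc 2 M := by
      apply Finset.union_subset
      · exact Finset.filter_subset _ _
      · exact Finset.biUnion_subset.mpr hMulsub
    calc S.card + ∑ q ∈ Qf, (Mul q).card = (S ∪ Qf.biUnion Mul).card := by
          rw [Finset.card_union_of_disjoint hdisjSU, hdU]
    _ ≤ (Finset.Icc 2 M).card := Finset.card_le_card hsub
    _ = M - 1 := by rw [Nat.card_Icc]; omega
  have hfloor : ∀ q ∈ Qf, ((Mul q).card : ℝ) = (⌊X / (q:ℝ)⌋ : ℝ) := by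
    intro q hq
    have hq0 : (0:ℝ) ≤ X / (q:ℝ) := by positivity
    rw [hMulcard q]
    have h1 : M / q = ⌊X / (q:ℝ)⌋₊ := by rw [Nat.floor_div_natCast X q, hM_def]
    rw [h1]
    exact_mod_cast natCast_floor_eq_intCast_floor hq0
  -- convert the tsum
  have htsum : ∑' q : {q : ℕ | q.Prime ∧ Q ≤ (q:ℝ) ∧ (q:ℝ) < X},
      (⌊X / ((q:ℕ):ℝ)⌋ : ℝ) = ∑ q ∈ Qf, (⌊X / (q:ℝ)⌋ : ℝ) := by
    rw [hQset]
    exact Finset.tsum_subtype' Qf (fun q => ((⌊X / (q:ℝ)⌋ : ℤ) : ℝ))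
  rw [hset_eq, Set.ncard_coe_finset]
  rw [htsum]
  have hsum_eq : ∑ q ∈ Qf, ((⌊X / (q:ℝ)⌋ : ℝ)) = ∑ q ∈ Qf, ((Mul q).card : ℝ) :=
    Finset.sum_congr rfl (fun q hq => (hfloor q hq).symm)
  rw [hsum_eq]
  have hcastle : (S.card:ℝ) + ∑ q ∈ Qf, ((Mul q).card:ℝ) ≤ (M:ℝ) - 1 := by
    have h2 : ((S.card + ∑ q ∈ Qf, (Mul q).card : ℕ) : ℝ) ≤ ((M - 1 : ℕ) : ℝ) :=
      Nat.cast_le.mpr hunion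
    rw [Nat.cast_sub hM1] at h2
    push_cast at h2
    linarith
  have hWle : (W.card : ℝ) ≤ (S.card:ℝ) := Nat.cast_le.mpr hcard1
  linarith
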